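/- Let K be a field of characteristic zero and n ≥ 4. If V is a K-linear subspace of the space of derivations of T(n) such that no nonzero element of V is nilpotent as a K-linear endomorphism of T(n) (i.e., the elements of V are linearly nilindependent), then dim_K V ≤ n − 1. -/

import Mathlib

open Matrix

attribute [local instance 100] LieRing.ofAssociativeRing

/-- The Lie algebra `T(n)` of strictly upper triangular `n × n` matrices over `K`. -/
def strictUpper (n : ℕ) (K : Type*) [Field K] :
    LieSubalgebra K (Matrix (Fin n) (Fin n) K) where
  carrier := {M | ∀ i j : Fin n, j ≤ i → M i j = 0}
  add_mem' := by
    intro a b ha hb i j hij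
    simp [Matrix.add_apply, ha i j hij, hb i j hij]
  zero_mem' := by intro i j hij; simp
  smul_mem' := by
    intro c a ha i j hij
    simp [Matrix.smul_apply, ha i j hij]
  lie_mem' := by
    intro a b ha hb i j hij
    have hmul : ∀ x y : Matrix (Fin n) (Fin n) K,
        (∀ i j : Fin n, j ≤ i → x i j = 0) → (∀ i j : Fin n, j ≤ i → y i j = 0) →
        (x * y) i j = 0 := by
      intro x y hx hy
      rw [Matrix.mul_apply]
      apply Finset.sum_eq_zero
      intro s _
      rcases le_or_gt s i with h | h
      · rw [hx i s h, zero_mul]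
      · rw [hy s j (hij.trans h.le), mul_zero]
    rw [Ring.lie_def, Matrix.sub_apply, hmul a b ha hb, hmul b a hb ha, sub_zero]

/-- The standard basis element `N_{ik}` (with `i < k`) of `T(n)`. -/
def stdN {n : ℕ} {K : Type*} [Field K] {i k : Fin n} (h : i < k) :
    strictUpper n K :=
  ⟨Matrix.single i k 1, by
    intro a b hba
    simp only [Matrix.single, Matrix.of_apply, ite_eq_right_iff, one_ne_zero]
    rintro ⟨rfl, rfl⟩
    exact absurd h (not_lt.mpr hba)⟩

namespace Nilindep

variable {n : ℕ} {K : Type*} [Field K]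

lemma val_add (x y : strictUpper n K) : (x + y).val = x.val + y.val := rfl

lemma val_smul (c : K) (x : strictUpper n K) : (c • x).val = c • x.val := rfl

lemma val_zero : ((0 : strictUpper n K)).val = 0 := rfl

lemma lie_val (x y : strictUpper n K) :
    (⁅x, y⁆ : strictUpper n K).val = x.val * y.val - y.val * x.val := rfl

lemma stdN_val {i k : Fin n} (h : i < k) :
    (stdN (K := K) h).val = Matrix.single i k 1 := rfl

lemma stdN_val_apply {i k : Fin n} (h : i < k) (p q : Fin n) :
    (stdN (K := K) h).val p q = if i = p ∧ k = q then 1 else 0 := rfl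

/-- Entry of `⁅x, E_{cd}⁆`. -/
lemma lie_stdN_right (x : strictUpper n K) {c d : Fin n} (h : c < d) (p q : Fin n) :
    (⁅x, stdN h⁆ : strictUpper n K).val p q
      = (if q = d then x.val p c else 0) - (if p = c then x.val d q else 0) := by
  rw [lie_val, Matrix.sub_apply, stdN_val]
  congr 1
  · by_cases hq : q = d
    · subst hq; simp
    · rw [Matrix.mul_single_apply_of_ne (hbj := hq), if_neg hq]
  · by_cases hp : p = c
    · subst hp; simp
    · rw [Matrix.single_mul_apply_of_ne (h := hp), if_neg hp]

/-- Entry of `⁅E_{ab}, x⁆`. -/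
lemma lie_stdN_left (x : strictUpper n K) {a b : Fin n} (h : a < b) (p q : Fin n) :
    (⁅stdN (K := K) h, x⁆ : strictUpper n K).val p q
      = (if p = a then x.val b q else 0) - (if q = b then x.val p a else 0) := by
  rw [lie_val, Matrix.sub_apply, stdN_val]
  congr 1
  · by_cases hp : p = a
    · subst hp; simp
    · rw [Matrix.single_mul_apply_of_ne (h := hp), if_neg hp]
  · by_cases hq : q = b
    · subst hq; simp
    · rw [Matrix.mul_single_apply_of_ne (hbj := hq), if_neg hq]

lemma adj {a b c : Fin n} (h1 : a < b) (h2 : b < c) :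
    (⁅stdN (K := K) h1, stdN h2⁆ : strictUpper n K) = stdN (h1.trans h2) := by
  apply Subtype.ext
  rw [lie_val, stdN_val, stdN_val, stdN_val, Matrix.single_mul_single_same,
    Matrix.single_mul_single_of_ne (h := (h1.trans h2).ne'), one_mul, sub_zero]

/-- The master relation: entries of `0 = ⁅D E_{ab}, E_{cd}⁆ + ⁅E_{ab}, D E_{cd}⁆`. -/
lemma master (D : LieDerivation K (strictUpper n K) (strictUpper n K))
    {a b c d : Fin n} (hab : a < b) (hcd : c < d) (hbc : b ≠ c) (hda : d ≠ a) (p q : Fin n) :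
    ((if q = d then (D (stdN hab)).val p c else 0)
      - (if p = c then (D (stdN hab)).val d q else 0))
    + ((if p = a then (D (stdN hcd)).val b q else 0)
      - (if q = b then (D (stdN hcd)).val p a else 0)) = 0 := by
  have h0 : (⁅(stdN hab : strictUpper n K), stdN hcd⁆ : strictUpper n K) = 0 := by
    apply Subtype.ext
    rw [lie_val, stdN_val, stdN_val, Matrix.single_mul_single_of_ne (h := hbc),
      Matrix.single_mul_single_of_ne (h := hda), val_zero, sub_zero]
  have h1 := D.apply_lie_eq_add (stdN hab) (stdN hcd)
  rw [h0, map_zero] at h1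
  have h2 := congrArg (fun z : strictUpper n K => z.val p q) h1.symm
  simp only [val_add, Matrix.add_apply, val_zero, Matrix.zero_apply] at h2
  rw [lie_stdN_right _ hcd, lie_stdN_left _ hab] at h2
  rw [add_comm]
  exact h2

/-- `E_{i,i+1}` with natural-number index. -/
def ee (i : ℕ) (hi : i + 1 < n) : strictUpper n K :=
  stdN (i := ⟨i, by omega⟩) (k := ⟨i + 1, hi⟩) (Fin.mk_lt_mk.mpr (Nat.lt_succ_self i))

variable (D : LieDerivation K (strictUpper n K) (strictUpper n K))

lemma caseA (i p : ℕ) (hi : i + 1 < n) (hp2 : p + 2 < n)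
    (h1 : p ≠ i) (h2 : p + 2 ≠ i) (h3 : p + 2 ≠ i + 1) :
    (D (ee i hi)).val ⟨p, by omega⟩ ⟨p + 1, by omega⟩ = 0 := by
  have H := master D (a := ⟨i, by omega⟩) (b := ⟨i + 1, hi⟩) (c := ⟨p + 1, by omega⟩)
      (d := ⟨p + 2, hp2⟩) (Fin.mk_lt_mk.mpr (by omega)) (Fin.mk_lt_mk.mpr (by omega))
      (Fin.ne_of_val_ne (show i + 1 ≠ p + 1 by omega))
      (Fin.ne_of_val_ne (show p + 2 ≠ i by omega))
      ⟨p, by omega⟩ ⟨p + 2, hp2⟩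
  rw [if_pos rfl, if_neg (Fin.ne_of_val_ne (by omega : p ≠ p + 1)),
    if_neg (Fin.ne_of_val_ne (by omega : p ≠ i)),
    if_neg (Fin.ne_of_val_ne (by omega : p + 2 ≠ i + 1))] at H
  simpa [ee] using H

lemma caseB (i p : ℕ) (hi : i + 1 < n) (hp : p + 1 < n)
    (h0 : 1 ≤ p) (h1 : p ≠ i) (h2 : p ≠ i + 1) (h3 : p ≠ i + 2) :
    (D (ee i hi)).val ⟨p, by omega⟩ ⟨p + 1, hp⟩ = 0 := by
  have H := master D (a := ⟨p - 1, by omega⟩) (b := ⟨p, by omega⟩) (c := ⟨i, by omega⟩)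
      (d := ⟨i + 1, hi⟩) (Fin.mk_lt_mk.mpr (by omega)) (Fin.mk_lt_mk.mpr (by omega))
      (Fin.ne_of_val_ne (show p ≠ i by omega))
      (Fin.ne_of_val_ne (show i + 1 ≠ p - 1 by omega))
      ⟨p - 1, by omega⟩ ⟨p + 1, hp⟩
  rw [if_neg (Fin.ne_of_val_ne (by omega : p + 1 ≠ i + 1)),
    if_neg (Fin.ne_of_val_ne (by omega : p - 1 ≠ i)), if_pos rfl,
    if_neg (Fin.ne_of_val_ne (by omega : p + 1 ≠ p))] at H
  simpa [ee] using H

lemma caseC (p : ℕ) (hi : p + 1 + 1 < n) (h4 : p + 3 < n) :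
    (D (ee (p + 1) hi)).val ⟨p, by omega⟩ ⟨p + 1, by omega⟩ = 0 := by
  have H := master D (a := ⟨p + 1, by omega⟩) (b := ⟨p + 2, by omega⟩) (c := ⟨p + 1, by omega⟩)
      (d := ⟨p + 3, h4⟩) (Fin.mk_lt_mk.mpr (by omega)) (Fin.mk_lt_mk.mpr (by omega))
      (Fin.ne_of_val_ne (show p + 2 ≠ p + 1 by omega))
      (Fin.ne_of_val_ne (show p + 3 ≠ p + 1 by omega))
      ⟨p, by omega⟩ ⟨p + 3, h4⟩
  rw [if_pos rfl, if_neg (Fin.ne_of_val_ne (by omega : p ≠ p + 1)),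
    if_neg (Fin.ne_of_val_ne (by omega : p ≠ p + 1)),
    if_neg (Fin.ne_of_val_ne (by omega : p + 3 ≠ p + 2))] at H
  simpa [ee] using H

lemma caseD (i : ℕ) (h0 : 1 ≤ i) (hi : i + 1 < n) (h2 : i + 2 < n) :
    (D (ee i hi)).val ⟨i + 1, by omega⟩ ⟨i + 2, h2⟩ = 0 := by
  have H := master D (a := ⟨i, by omega⟩) (b := ⟨i + 1, hi⟩) (c := ⟨i - 1, by omega⟩)
      (d := ⟨i + 1, by omega⟩) (Fin.mk_lt_mk.mpr (by omega)) (Fin.mk_lt_mk.mpr (by omega))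
      (Fin.ne_of_val_ne (show i + 1 ≠ i - 1 by omega))
      (Fin.ne_of_val_ne (show i + 1 ≠ i by omega))
      ⟨i - 1, by omega⟩ ⟨i + 2, h2⟩
  rw [if_neg (Fin.ne_of_val_ne (by omega : i + 2 ≠ i + 1)), if_pos rfl,
    if_neg (Fin.ne_of_val_ne (by omega : i - 1 ≠ i)),
    if_neg (Fin.ne_of_val_ne (by omega : i + 2 ≠ i + 1))] at H
  simpa [ee] using H

lemma caseG [CharZero K] (p : ℕ) (hi : p + 2 + 1 < n) :
    (D (ee (p + 2) hi)).val ⟨p, by omega⟩ ⟨p + 1, by omega⟩ = 0 := by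
  have hpn : p < n := by omega
  have hp1n : p + 1 < n := by omega
  have hp2n : p + 2 < n := by omega
  have hp3n : p + 3 < n := by omega
  have h1 : (⟨p + 1, hp1n⟩ : Fin n) < ⟨p + 2, hp2n⟩ := Fin.mk_lt_mk.mpr (by omega)
  have h2 : (⟨p + 2, hp2n⟩ : Fin n) < ⟨p + 3, hp3n⟩ := Fin.mk_lt_mk.mpr (by omega)
  have hD2 : D (stdN (h1.trans h2))
      = ⁅D (stdN h1), stdN (K := K) h2⁆ + ⁅stdN (K := K) h1, D (stdN h2)⁆ := by
    rw [← adj (K := K) h1 h2, D.apply_lie_eq_add]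
    exact add_comm _ _
  have H := master D (a := ⟨p + 2, hp2n⟩) (b := ⟨p + 3, hp3n⟩) (c := ⟨p + 1, hp1n⟩)
      (d := ⟨p + 3, hp3n⟩) h2 (h1.trans h2)
      (Fin.ne_of_val_ne (show p + 3 ≠ p + 1 by omega))
      (Fin.ne_of_val_ne (show p + 3 ≠ p + 2 by omega))
      ⟨p, hpn⟩ ⟨p + 3, hp3n⟩
  rw [if_pos rfl, if_neg (Fin.ne_of_val_ne (by omega : p ≠ p + 1)),
    if_neg (Fin.ne_of_val_ne (by omega : p ≠ p + 2)), if_pos rfl, hD2] at H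
  have hC : (⁅D (stdN h1), stdN (K := K) h2⁆ + ⁅stdN (K := K) h1, D (stdN h2)⁆ : strictUpper n K).val
      ⟨p, hpn⟩ ⟨p + 2, hp2n⟩ = -(D (stdN h2)).val ⟨p, hpn⟩ ⟨p + 1, hp1n⟩ := by
    rw [val_add, Matrix.add_apply, lie_stdN_right _ h2, lie_stdN_left _ h1]
    rw [if_neg (Fin.ne_of_val_ne (by omega : p + 2 ≠ p + 3)),
      if_neg (Fin.ne_of_val_ne (by omega : p ≠ p + 2)),
      if_neg (Fin.ne_of_val_ne (by omega : p ≠ p + 1)), if_pos rfl]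
    ring
  rw [hC] at H
  have h2K : (2 : K) ≠ 0 := two_ne_zero
  have hmul : (2 : K) * (D (stdN h2)).val ⟨p, hpn⟩ ⟨p + 1, hp1n⟩ = 0 := by
    linear_combination H
  have := (mul_eq_zero.mp hmul).resolve_left h2K
  simpa [ee] using this

lemma caseH [CharZero K] (i : ℕ) (hi : i + 1 < n) (h3 : i + 3 < n) :
    (D (ee i hi)).val ⟨i + 2, by omega⟩ ⟨i + 3, h3⟩ = 0 := by
  have hin : i < n := by omega
  have hi1n : i + 1 < n := by omega
  have hi2n : i + 2 < n := by omega
  have h1 : (⟨i, hin⟩ : Fin n) < ⟨i + 1, hi1n⟩ := Fin.mk_lt_mk.mpr (by omega)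
  have h2 : (⟨i + 1, hi1n⟩ : Fin n) < ⟨i + 2, hi2n⟩ := Fin.mk_lt_mk.mpr (by omega)
  have hD2 : D (stdN (h1.trans h2))
      = ⁅D (stdN h1), stdN (K := K) h2⁆ + ⁅stdN (K := K) h1, D (stdN h2)⁆ := by
    rw [← adj (K := K) h1 h2, D.apply_lie_eq_add]
    exact add_comm _ _
  have H := master D (a := ⟨i, hin⟩) (b := ⟨i + 1, hi1n⟩) (c := ⟨i, hin⟩)
      (d := ⟨i + 2, hi2n⟩) h1 (h1.trans h2)
      (Fin.ne_of_val_ne (show i + 1 ≠ i by omega))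
      (Fin.ne_of_val_ne (show i + 2 ≠ i by omega))
      ⟨i, hin⟩ ⟨i + 3, h3⟩
  rw [if_neg (Fin.ne_of_val_ne (by omega : i + 3 ≠ i + 2)), if_pos rfl, if_pos rfl,
    if_neg (Fin.ne_of_val_ne (by omega : i + 3 ≠ i + 1)), hD2] at H
  have hC : (⁅D (stdN h1), stdN (K := K) h2⁆ + ⁅stdN (K := K) h1, D (stdN h2)⁆ : strictUpper n K).val
      ⟨i + 1, hi1n⟩ ⟨i + 3, h3⟩
      = -(D (stdN h1)).val ⟨i + 2, hi2n⟩ ⟨i + 3, h3⟩ := by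
    rw [val_add, Matrix.add_apply, lie_stdN_right _ h2, lie_stdN_left _ h1]
    rw [if_neg (Fin.ne_of_val_ne (by omega : i + 3 ≠ i + 2)), if_pos rfl,
      if_neg (Fin.ne_of_val_ne (by omega : i + 1 ≠ i)),
      if_neg (Fin.ne_of_val_ne (by omega : i + 3 ≠ i + 1))]
    ring
  rw [hC] at H
  have h2K : (2 : K) ≠ 0 := two_ne_zero
  have hmul : (2 : K) * (D (stdN h1)).val ⟨i + 2, hi2n⟩ ⟨i + 3, h3⟩ = 0 := by
    linear_combination -H
  have := (mul_eq_zero.mp hmul).resolve_left h2K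
  simpa [ee] using this

lemma offdiag [CharZero K] (hn : 4 ≤ n) (i p : ℕ) (hi : i + 1 < n) (hp : p + 1 < n)
    (hpi : p ≠ i) : (D (ee i hi)).val ⟨p, by omega⟩ ⟨p + 1, hp⟩ = 0 := by
  by_cases h1 : p = i + 1
  · subst h1
    by_cases h0 : i = 0
    · subst h0
      exact caseA D 0 1 hi (by omega) (by omega) (by omega) (by omega)
    · exact caseD D i (by omega) hi (by omega)
  · by_cases h2 : p = i + 2
    · subst h2
      exact caseH D i hi (by omega)
    · by_cases h3 : i = p + 1
      · subst h3
        by_cases h4 : p + 3 < n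
        · exact caseC D p hi h4
        · exact caseB D (p + 1) p hi hp (by omega) (by omega) (by omega) (by omega)
      · by_cases h5 : i = p + 2
        · subst h5
          exact caseG D p hi
        · by_cases h6 : p = 0
          · subst h6
            exact caseA D i 0 hi (by omega) (by omega) (by omega) (by omega)
          · exact caseB D i p hi hp (by omega) (by omega) (by omega) (by omega)

/-! ### The degree filtration and nilpotency -/

/-- `x` has all nonzero entries at distance at least `d` above the diagonal. -/
def Pd (d : ℕ) (x : strictUpper n K) : Prop :=
  ∀ p q : Fin n, x.val p q ≠ 0 → (p : ℕ) + d ≤ (q : ℕ)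

lemma Pd_mono {d d' : ℕ} (h : d' ≤ d) {x : strictUpper n K} (hx : Pd d x) : Pd d' x :=
  fun p q hpq => by have := hx p q hpq; omega

lemma Pd_zero (d : ℕ) : Pd d (0 : strictUpper n K) := by
  intro p q h
  exact absurd rfl h

lemma Pd_add {d : ℕ} {x y : strictUpper n K} (hx : Pd d x) (hy : Pd d y) : Pd d (x + y) := by
  intro p q h
  rw [val_add, Matrix.add_apply] at h
  by_cases h1 : x.val p q = 0
  · exact hy p q (by rw [h1, zero_add] at h; exact h)
  · exact hx p q h1

lemma Pd_smul {d : ℕ} (c : K) {x : strictUpper n K} (hx : Pd d x) : Pd d (c • x) := by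
  intro p q h
  rw [val_smul, Matrix.smul_apply] at h
  exact hx p q fun h0 => h (by rw [h0, smul_zero])

lemma Pd_sum {d : ℕ} {ι : Type*} (s : Finset ι) (f : ι → strictUpper n K)
    (hf : ∀ i ∈ s, Pd d (f i)) : Pd d (∑ i ∈ s, f i) :=
  Finset.sum_induction f _ (fun _ _ => Pd_add) (Pd_zero d) hf

lemma Pd_one (x : strictUpper n K) : Pd 1 x := by
  intro p q h
  rcases le_or_gt q p with hle | hlt
  · exact absurd (x.prop p q hle) h
  · have : (p : ℕ) < (q : ℕ) := hlt
    omega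

lemma Pd_stdN {i j : Fin n} (h : i < j) {d : ℕ} (hd : (i : ℕ) + d ≤ (j : ℕ)) :
    Pd d (stdN (K := K) h) := by
  intro p q hpq
  rw [stdN_val_apply] at hpq
  by_cases h1 : i = p ∧ j = q
  · obtain ⟨rfl, rfl⟩ := h1
    omega
  · rw [if_neg h1] at hpq
    exact absurd rfl hpq

lemma Pd_bracket {a b : ℕ} {x y : strictUpper n K} (hx : Pd a x) (hy : Pd b y) :
    Pd (a + b) ⁅x, y⁆ := by
  have key : ∀ (u v : strictUpper n K) (c e : ℕ), Pd c u → Pd e v →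
      ∀ p q : Fin n, (u.val * v.val) p q ≠ 0 → (p : ℕ) + (c + e) ≤ (q : ℕ) := by
    intro u v c e hu hv p q hpq
    rw [Matrix.mul_apply] at hpq
    obtain ⟨k, -, hk⟩ := Finset.exists_ne_zero_of_sum_ne_zero hpq
    have h1 := hu p k (left_ne_zero_of_mul hk)
    have h2 := hv k q (right_ne_zero_of_mul hk)
    omega
  intro p q hpq
  rw [lie_val, Matrix.sub_apply] at hpq
  by_cases h1 : (x.val * y.val) p q = 0
  · have h2 : (y.val * x.val) p q ≠ 0 := by
      intro h0
      rw [h1, h0, sub_zero] at hpq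
      exact hpq rfl
    have := key y x b a hy hx p q h2
    omega
  · exact key x y a b hx hy p q h1

/-- Basis decomposition helper. -/
def eo (p q : Fin n) : strictUpper n K := if h : p < q then stdN h else 0

lemma eo_val_apply (p q a b : Fin n) :
    (eo (K := K) p q).val a b = if p = a ∧ q = b ∧ p < q then 1 else 0 := by
  unfold eo
  by_cases h : p < q
  · rw [dif_pos h, stdN_val_apply]
    by_cases h1 : p = a ∧ q = b
    · rw [if_pos h1, if_pos ⟨h1.1, h1.2, h⟩]
    · rw [if_neg h1, if_neg (by tauto)]
  · rw [dif_neg h, if_neg (by tauto)]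
    rfl

lemma val_sum {ι : Type*} (s : Finset ι) (f : ι → strictUpper n K) :
    (∑ i ∈ s, f i).val = ∑ i ∈ s, (f i).val := by
  classical
  induction s using Finset.induction_on with
  | empty => rw [Finset.sum_empty, Finset.sum_empty]; rfl
  | @insert _ _ h ih => rw [Finset.sum_insert h, Finset.sum_insert h, val_add, ih]

lemma decomp (x : strictUpper n K) :
    x = ∑ p : Fin n, ∑ q : Fin n, x.val p q • eo p q := by
  apply Subtype.ext
  apply Matrix.ext
  intro a b
  have hterm : ∀ p q : Fin n, (x.val p q • eo (K := K) p q).val a b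
      = if p = a ∧ q = b ∧ p < q then x.val p q else 0 := by
    intro p q
    rw [val_smul, Matrix.smul_apply, eo_val_apply, smul_eq_mul, mul_ite, mul_one, mul_zero]
  have h1 : (∑ p : Fin n, ∑ q : Fin n, x.val p q • eo (K := K) p q).val a b
      = ∑ p : Fin n, ∑ q : Fin n, (if p = a ∧ q = b ∧ p < q then x.val p q else 0) := by
    rw [val_sum, Matrix.sum_apply]
    refine Finset.sum_congr rfl fun p _ => ?_
    rw [val_sum, Matrix.sum_apply]
    exact Finset.sum_congr rfl fun q _ => hterm p q
  rw [h1, Finset.sum_eq_single (f := fun p : Fin n => ∑ q : Fin n,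
        (if p = a ∧ q = b ∧ p < q then x.val p q else 0)) a
      (fun p _ hp => Finset.sum_eq_zero fun q _ => if_neg (by tauto))
      (fun h => absurd (Finset.mem_univ a) h),
    Finset.sum_eq_single (f := fun q : Fin n =>
        (if a = a ∧ q = b ∧ a < q then x.val a q else 0)) b (fun q _ hq => if_neg (by tauto))
      (fun h => absurd (Finset.mem_univ b) h)]
  by_cases hab : a < b
  · rw [if_pos ⟨rfl, rfl, hab⟩]
  · rw [if_neg (by tauto), x.prop a b (not_lt.mp hab)]

lemma key [CharZero K] (hn : 4 ≤ n)
    (hdiag : ∀ (i : ℕ) (hi : i + 1 < n), (D (ee i hi)).val ⟨i, by omega⟩ ⟨i + 1, hi⟩ = 0) :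
    ∀ (m : ℕ) (i j : Fin n) (hij : i < j), (j : ℕ) ≤ (i : ℕ) + m →
      Pd ((j : ℕ) - (i : ℕ) + 1) (D (stdN hij)) := by
  intro m
  induction m with
  | zero =>
    intro i j hij hle
    have : (i : ℕ) < (j : ℕ) := hij
    omega
  | succ m ih =>
    intro i j hij hle
    have hiltj : (i : ℕ) < (j : ℕ) := hij
    by_cases hj : (j : ℕ) = (i : ℕ) + 1
    · -- base case : `j = i + 1`
      have hi1 : (i : ℕ) + 1 < n := by have := j.isLt; omega
      have hjeq : j = ⟨(i : ℕ) + 1, hi1⟩ := Fin.ext hj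
      subst hjeq
      intro p q hpq
      have hq : (q : ℕ) < n := q.isLt
      have hj1 : ((⟨(i : ℕ) + 1, hi1⟩ : Fin n) : ℕ) = (i : ℕ) + 1 := rfl
      have hgoal : (p : ℕ) + 2 ≤ (q : ℕ) := by
        by_contra hcon
        rcases le_or_gt (q : ℕ) (p : ℕ) with hle2 | hlt2
        · exact hpq ((D (stdN hij)).prop p q (by exact hle2))
        · have hp1 : (p : ℕ) + 1 < n := by omega
          have hqeq : q = ⟨(p : ℕ) + 1, hp1⟩ := Fin.ext (show (q : ℕ) = (p : ℕ) + 1 by omega)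
          have hstd : stdN (K := K) hij = ee (i : ℕ) hi1 := Subtype.ext rfl
          rw [hqeq, hstd] at hpq
          apply hpq
          by_cases hpi : (p : ℕ) = (i : ℕ)
          · have h0 := hdiag (i : ℕ) hi1
            have e1 : (⟨(i : ℕ), by omega⟩ : Fin n) = p := Fin.ext hpi.symm
            have e2 : (⟨(i : ℕ) + 1, hi1⟩ : Fin n) = ⟨(p : ℕ) + 1, hp1⟩ :=
              Fin.ext (show (i : ℕ) + 1 = (p : ℕ) + 1 by omega)
            rw [e1, e2] at h0
            exact h0
          · have h0 := offdiag D hn (i : ℕ) (p : ℕ) hi1 hp1 hpi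
            have e1 : (⟨(p : ℕ), by omega⟩ : Fin n) = p := Fin.ext rfl
            rw [e1] at h0
            exact h0
      omega
    · -- inductive step: split `E_{ij} = ⁅E_{ik}, E_{kj}⁆` with `k = j - 1`
      have hjn : (j : ℕ) < n := j.isLt
      have hkn : (j : ℕ) - 1 < n := by omega
      set k : Fin n := ⟨(j : ℕ) - 1, hkn⟩ with hkdef
      have hkval : (k : ℕ) = (j : ℕ) - 1 := rfl
      have hik : i < k := by
        rw [Fin.lt_def, hkval]
        omega
      have hkj : k < j := by
        rw [Fin.lt_def, hkval]
        omega
      have hsplit : stdN (K := K) hij = ⁅stdN (K := K) hik, stdN (K := K) hkj⁆ := by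
        rw [adj (K := K) hik hkj]
      rw [hsplit, D.apply_lie_eq_add]
      apply Pd_add
      · have h1 : Pd ((k : ℕ) - (i : ℕ)) (stdN (K := K) hik) := Pd_stdN hik (by omega)
        have h2 : Pd ((j : ℕ) - (k : ℕ) + 1) (D (stdN hkj)) := ih k j hkj (by omega)
        exact Pd_mono (by omega) (Pd_bracket h1 h2)
      · have h1 : Pd ((k : ℕ) - (i : ℕ) + 1) (D (stdN hik)) := ih i k hik (by omega)
        have h2 : Pd ((j : ℕ) - (k : ℕ)) (stdN (K := K) hkj) := Pd_stdN hkj (by omega)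
        exact Pd_mono (by omega) (Pd_bracket h1 h2)

lemma PDstep [CharZero K] (hn : 4 ≤ n)
    (hdiag : ∀ (i : ℕ) (hi : i + 1 < n), (D (ee i hi)).val ⟨i, by omega⟩ ⟨i + 1, hi⟩ = 0)
    {d : ℕ} {x : strictUpper n K} (hx : Pd d x) : Pd (d + 1) (D x) := by
  rw [decomp x, map_sum]
  apply Pd_sum
  intro p _
  rw [map_sum]
  apply Pd_sum
  intro q _
  rw [_root_.map_smul]
  by_cases hpq : p < q
  · by_cases hx0 : x.val p q = 0
    · rw [hx0, zero_smul]
      exact Pd_zero _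
    · apply Pd_smul
      have hle := hx p q hx0
      have hq := q.isLt
      have heo : eo (K := K) p q = stdN hpq := dif_pos hpq
      rw [heo]
      exact Pd_mono (by omega) (key D hn hdiag n p q hpq (by omega))
  · have heo : eo (K := K) p q = 0 := dif_neg hpq
    rw [heo, map_zero, smul_zero]
    exact Pd_zero _

lemma mainNilp [CharZero K] (hn : 4 ≤ n)
    (hdiag : ∀ (i : ℕ) (hi : i + 1 < n), (D (ee i hi)).val ⟨i, by omega⟩ ⟨i + 1, hi⟩ = 0) :
    IsNilpotent (D.toLinearMap : Module.End K (strictUpper n K)) := by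
  refine ⟨n + 1, ?_⟩
  have hiter : ∀ (m : ℕ) (x : strictUpper n K), Pd (1 + m) ((D.toLinearMap ^ m) x) := by
    intro m
    induction m with
    | zero => intro x; exact Pd_one x
    | succ m ih =>
      intro x
      rw [pow_succ', Module.End.mul_apply]
      exact PDstep D hn hdiag (ih x)
  ext x i j
  have h1 : ((D.toLinearMap ^ (n + 1)) x).val i j = 0 := by
    by_contra hc
    have h2 := hiter (n + 1) x i j hc
    have h3 := j.isLt
    omega
  simpa using h1

end Nilindep

/-- A subspace of derivations of $T(n)$ that is linearly nilindependent (no nonzero element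
is a nilpotent endomorphism) has dimension at most $n - 1$. -/
theorem nilindependent_derivations_dim_le
    (K : Type*) [Field K] [CharZero K] (n : ℕ) (hn : 4 ≤ n)
    (V : Submodule K (LieDerivation K (strictUpper n K) (strictUpper n K)))
    (hV : ∀ D ∈ V, D ≠ 0 →
      ¬IsNilpotent (LieDerivation.toLinearMap D : Module.End K (strictUpper n K))) :
    Module.finrank K V ≤ n - 1 := by
  classical
  have hn1 : ∀ i : Fin (n - 1), (i : ℕ) + 1 < n := fun i => by have := i.isLt; omega
  let ψ : V →ₗ[K] (Fin (n - 1) → K) :=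
    { toFun := fun Dv => fun i =>
        ((Dv : LieDerivation K (strictUpper n K) (strictUpper n K))
          (Nilindep.ee (i : ℕ) (hn1 i))).val ⟨(i : ℕ), by have := i.isLt; omega⟩
          ⟨(i : ℕ) + 1, hn1 i⟩
      map_add' := by
        intro D1 D2
        funext i
        rw [Submodule.coe_add, LieDerivation.add_apply, Nilindep.val_add, Matrix.add_apply]
        rfl
      map_smul' := by
        intro c D1
        funext i
        rw [Submodule.coe_smul, LieDerivation.smul_apply, Nilindep.val_smul, Matrix.smul_apply]
        rfl }
  have hinj : Function.Injective ψ := by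
    rw [← LinearMap.ker_eq_bot]
    rw [Submodule.eq_bot_iff]
    intro Dv hDv
    have hDv0 : ψ Dv = 0 := LinearMap.mem_ker.mp hDv
    have hdiag : ∀ (i : ℕ) (hi : i + 1 < n),
        ((Dv : LieDerivation K (strictUpper n K) (strictUpper n K))
          (Nilindep.ee i hi)).val ⟨i, by omega⟩ ⟨i + 1, hi⟩ = 0 := by
      intro i hi
      have hlt : i < n - 1 := by omega
      exact congrFun hDv0 ⟨i, hlt⟩
    have hnilp := Nilindep.mainNilp
      (Dv : LieDerivation K (strictUpper n K) (strictUpper n K)) hn hdiag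
    by_contra hne
    exact hV _ Dv.property (fun h0 => hne (Subtype.ext h0)) hnilp
  have hle : Module.finrank K V ≤ Module.finrank K (Fin (n - 1) → K) :=
    LinearMap.finrank_le_finrank_of_injective hinj
  rw [Module.finrank_fin_fun] at hle
  exact hle
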